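/- Concatenation multiplicativity relations: in the quotient of the free commutative monoid on {Λ_i, Λ'_i : i ≥ 0} by the relations Λ_i·Λ_j = Λ_{i+j}, Λ'_i·Λ'_j = Λ'_{i+j}, and for i > j, Λ'_i·Λ_j = Λ'_{i−j} and Λ_i·Λ'_j = Λ_{i−j}, the concatenation of two reduced arc words corresponds to this product: if w₁ is an alternating arrow word of length 2i (of type Λ or Λ') and w₂ one of length 2j, then the reduction of the concatenated word w₁w₂ (with appropriate type matching at the junction) is the alternating word prescribed by the above relations. -/
import Mathlib


/-- One reduction step on arc words over {L, R} (modeled as `Bool`): delete two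
adjacent equal letters. -/
def BStep (w w' : List Bool) : Prop :=
  ∃ (x y : List Bool) (a : Bool), w = x ++ a :: a :: y ∧ w' = x ++ y

/-- The alternating word of length `n` whose first letter is `b`; with reference
direction `true`, the variable `Λ_i` is `altB true (2i)` and `Λ'_i` is
`altB false (2i)`. -/
def altB (b : Bool) : ℕ → List Bool
  | 0 => []
  | n + 1 => b :: altB (!b) n

lemma altB_add_two (b : Bool) (n : ℕ) : altB b (n + 2) = b :: (!b) :: altB b n := by
  simp [altB, Bool.not_not]

lemma altB_even_append (b : Bool) (l : ℕ) :
    ∀ k, altB b (2 * k + l) = altB b (2 * k) ++ altB b l := by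
  intro k
  induction k with
  | zero => simp [altB]
  | succ k ih =>
    have h : 2 * (k + 1) + l = (2 * k + l) + 2 := by ring
    have h2 : 2 * (k + 1) = (2 * k) + 2 := by ring
    rw [h, h2, altB_add_two, altB_add_two, ih]
    simp

lemma altB_two (b : Bool) : altB b 2 = [b, !b] := rfl

lemma mixed (b : Bool) : ∀ j i, j ≤ i →
    Relation.ReflTransGen BStep (altB b (2 * i) ++ altB (!b) (2 * j))
      (altB b (2 * (i - j))) := by
  intro j
  induction j with
  | zero => intro i _; simpa [altB] using Relation.ReflTransGen.refl
  | succ j ih =>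
    intro i hij
    obtain ⟨i', rfl⟩ : ∃ i', i = i' + 1 := ⟨i - 1, by omega⟩
    have e1 : altB b (2 * (i' + 1)) ++ altB (!b) (2 * (j + 1)) =
        (altB b (2 * i') ++ [b]) ++ (!b) :: (!b) :: (b :: altB (!b) (2 * j)) := by
      have h2 : 2 * (i' + 1) = 2 * i' + 2 := by ring
      have h3 : 2 * (j + 1) = 2 * j + 2 := by ring
      rw [h2, h3]
      rw [show 2 * i' + 2 = 2 * i' + 2 by rfl, altB_even_append b 2 i',
        altB_two, altB_add_two]
      simp
    have s1 : BStep (altB b (2 * (i' + 1)) ++ altB (!b) (2 * (j + 1)))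
        ((altB b (2 * i') ++ [b]) ++ (b :: altB (!b) (2 * j))) :=
      ⟨altB b (2 * i') ++ [b], b :: altB (!b) (2 * j), !b, e1, rfl⟩
    have s2 : BStep ((altB b (2 * i') ++ [b]) ++ (b :: altB (!b) (2 * j)))
        (altB b (2 * i') ++ altB (!b) (2 * j)) :=
      ⟨altB b (2 * i'), altB (!b) (2 * j), b, by simp, rfl⟩
    have tail := ih i' (by omega)
    have hsub : i' + 1 - (j + 1) = i' - j := by omega
    rw [hsub]
    exact Relation.ReflTransGen.head s1 (Relation.ReflTransGen.head s2 tail)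

theorem concatenation_multiplicativity (i j : ℕ) :
    Relation.ReflTransGen BStep (altB true (2 * i) ++ altB true (2 * j))
        (altB true (2 * (i + j))) ∧
      Relation.ReflTransGen BStep (altB false (2 * i) ++ altB false (2 * j))
        (altB false (2 * (i + j))) ∧
      (i > j → Relation.ReflTransGen BStep (altB false (2 * i) ++ altB true (2 * j))
        (altB false (2 * (i - j)))) ∧
      (i > j → Relation.ReflTransGen BStep (altB true (2 * i) ++ altB false (2 * j))
        (altB true (2 * (i - j)))) := by
  refine ⟨?_, ?_, fun h => ?_, fun h => ?_⟩
  · have e : altB true (2 * i) ++ altB true (2 * j) = altB true (2 * (i + j)) := by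
      rw [show 2 * (i + j) = 2 * i + 2 * j by ring, altB_even_append]
    rw [e]
  · have e : altB false (2 * i) ++ altB false (2 * j) = altB false (2 * (i + j)) := by
      rw [show 2 * (i + j) = 2 * i + 2 * j by ring, altB_even_append]
    rw [e]
  · exact mixed false j i h.le
  · exact mixed true j i h.le
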